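/- (Reduction to Sparse Case.) Let Φ be an m×d real matrix with restricted isometry constant δ_s ≤ 0.1. Let x ∈ ℝ^d be an arbitrary vector and e ∈ ℝ^m. Then the sample vector u = Φx + e can be expressed as u = Φx_s + ẽ, where ẽ = Φ(x − x_s) + e satisfies ‖ẽ‖₂ ≤ 1.05 (‖x − x_s‖₂ + ‖x − x_s‖₁/√s) + ‖e‖₂. -/

import Mathlib

/-- The Euclidean (ℓ2) norm of a finitely-indexed real vector. -/
noncomputable def l2 {ι : Type*} [Fintype ι] (v : ι → ℝ) : ℝ :=
  Real.sqrt (∑ i, (v i) ^ 2)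

/-- The ℓ1 norm of a finitely-indexed real vector. -/
noncomputable def l1 {ι : Type*} [Fintype ι] (v : ι → ℝ) : ℝ :=
  ∑ i, |v i|

/-- A vector is `s`-sparse if it has at most `s` nonzero coordinates. -/
def Sparse {d : ℕ} (s : ℕ) (v : Fin d → ℝ) : Prop :=
  {i | v i ≠ 0}.ncard ≤ s

/-- The restriction of a vector to a set of coordinates (zero elsewhere). -/
def restr {d : ℕ} (S : Finset (Fin d)) (v : Fin d → ℝ) : Fin d → ℝ :=
  fun i => if i ∈ S then v i else 0

/-- `δ` satisfies the restricted isometry inequalities of `Φ` at sparsity level `r`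
(quadratic form); `δ_r ≤ δ` is equivalent to this (for `δ ≥ 0`). -/
def RICq {m d : ℕ} (Φ : Matrix (Fin m) (Fin d) ℝ) (r : ℕ) (δ : ℝ) : Prop :=
  ∀ v : Fin d → ℝ, Sparse r v →
    (1 - δ) * (l2 v) ^ 2 ≤ (l2 (Φ.mulVec v)) ^ 2 ∧
      (l2 (Φ.mulVec v)) ^ 2 ≤ (1 + δ) * (l2 v) ^ 2

/-! ### Auxiliary lemmas -/

section Aux

variable {ι : Type*} [Fintype ι]

lemma l2_nonneg (v : ι → ℝ) : 0 ≤ l2 v := Real.sqrt_nonneg _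

lemma l1_nonneg (v : ι → ℝ) : 0 ≤ l1 v :=
  Finset.sum_nonneg fun i _ => abs_nonneg _

lemma l2_sq (v : ι → ℝ) : (l2 v) ^ 2 = ∑ i, (v i) ^ 2 :=
  Real.sq_sqrt (Finset.sum_nonneg fun i _ => sq_nonneg _)

lemma l2_eq_norm (v : ι → ℝ) :
    l2 v = ‖(WithLp.equiv 2 (ι → ℝ)).symm v‖ := by
  rw [EuclideanSpace.norm_eq]
  simp [l2, sq_abs]

lemma l2_add_le (a b : ι → ℝ) : l2 (a + b) ≤ l2 a + l2 b := by
  rw [l2_eq_norm, l2_eq_norm, l2_eq_norm]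
  rw [show (WithLp.equiv 2 (ι → ℝ)).symm (a + b)
      = (WithLp.equiv 2 (ι → ℝ)).symm a + (WithLp.equiv 2 (ι → ℝ)).symm b from rfl]
  exact norm_add_le _ _

/-- From the quadratic comparison of nonnegative quantities to the linear one. -/
lemma sqrt_mono_of_sq {a b : ℝ} (ha : 0 ≤ a) (hb : 0 ≤ b) (h : a ^ 2 ≤ b ^ 2) : a ≤ b := by
  nlinarith

end Aux

/-- The support of a vector as a `Finset`. -/
noncomputable def fsupp {d : ℕ} (v : Fin d → ℝ) : Finset (Fin d) :=
  Finset.univ.filter (fun i => v i ≠ 0)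

lemma mem_fsupp {d : ℕ} {v : Fin d → ℝ} {i : Fin d} : i ∈ fsupp v ↔ v i ≠ 0 := by
  simp [fsupp]

lemma sparse_of_card {d s : ℕ} {v : Fin d → ℝ} (h : (fsupp v).card ≤ s) : Sparse s v := by
  unfold Sparse
  rw [Set.ncard_eq_toFinset_card']
  convert h using 2
  ext i
  simp [fsupp]

lemma ric_l2 {m d s : ℕ} {Φ : Matrix (Fin m) (Fin d) ℝ} (hΦ : RICq Φ s (1 / 10))
    {v : Fin d → ℝ} (hv : (fsupp v).card ≤ s) :
    l2 (Φ.mulVec v) ≤ Real.sqrt 1.1 * l2 v := by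
  have h := (hΦ v (sparse_of_card hv)).2
  apply sqrt_mono_of_sq (l2_nonneg _)
  · exact mul_nonneg (Real.sqrt_nonneg _) (l2_nonneg _)
  · rw [mul_pow, Real.sq_sqrt (by norm_num)]
    nlinarith [l2_sq v, l2_sq (Φ.mulVec v)]

/-- Choose the `s` coordinates of largest value of `f` within `A`. -/
lemma exists_top {α : Type*} [DecidableEq α] (f : α → ℝ) :
    ∀ (s : ℕ) (A : Finset α), s ≤ A.card →
      ∃ T ⊆ A, T.card = s ∧ ∀ i ∈ T, ∀ j ∈ A \ T, f j ≤ f i := by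
  intro s
  induction s with
  | zero => exact fun A _ => ⟨∅, Finset.empty_subset _, rfl, by simp⟩
  | succ n ih =>
    intro A hA
    obtain ⟨T, hTA, hTc, hTtop⟩ := ih A (le_trans (Nat.le_succ n) hA)
    have hne : (A \ T).Nonempty := by
      rw [← Finset.card_pos, Finset.card_sdiff_of_subset hTA, hTc]
      omega
    obtain ⟨a, haAT, hamax⟩ := Finset.exists_max_image (A \ T) f hne
    refine ⟨insert a T, ?_, ?_, ?_⟩
    · exact Finset.insert_subset (Finset.mem_sdiff.mp haAT).1 hTA
    · rw [Finset.card_insert_of_notMem (Finset.mem_sdiff.mp haAT).2, hTc]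
    · intro i hi j hj
      have hj' : j ∈ A \ T := by
        rw [Finset.mem_sdiff] at hj ⊢
        exact ⟨hj.1, fun hjT => hj.2 (Finset.mem_insert_of_mem hjT)⟩
      rcases Finset.mem_insert.mp hi with rfl | hiT
      · exact hamax j hj'
      · exact hTtop i hiT j hj'

lemma fsupp_restr_subset {d : ℕ} (T : Finset (Fin d)) (v : Fin d → ℝ) :
    fsupp (restr T v) ⊆ T := by
  intro i hi
  rw [mem_fsupp] at hi
  by_contra h
  simp [restr, h] at hi

lemma l2_restr_le_sqrt_card_mul {d : ℕ} (T : Finset (Fin d)) (v : Fin d → ℝ) (t : ℝ)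
    (ht : 0 ≤ t) (hbound : ∀ i ∈ T, |v i| ≤ t) :
    l2 (restr T v) ≤ Real.sqrt T.card * t := by
  apply sqrt_mono_of_sq (l2_nonneg _) (by positivity)
  rw [mul_pow, Real.sq_sqrt (by positivity), l2_sq]
  calc ∑ i, (restr T v i) ^ 2
      = ∑ i, (if i ∈ T then (v i) ^ 2 else 0) := by
        apply Finset.sum_congr rfl
        intro i _
        simp only [restr]
        split <;> simp
    _ = ∑ i ∈ T, (v i) ^ 2 := by rw [Finset.sum_ite_mem, Finset.univ_inter]
    _ ≤ ∑ i ∈ T, t ^ 2 := Finset.sum_le_sum fun i hi => by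
        have := hbound i hi
        nlinarith [abs_nonneg (v i), sq_abs (v i)]
    _ = T.card * t ^ 2 := by rw [Finset.sum_const]; ring

lemma l1_restr {d : ℕ} (T : Finset (Fin d)) (v : Fin d → ℝ) :
    l1 (restr T v) = ∑ i ∈ T, |v i| := by
  unfold l1
  calc ∑ i, |restr T v i|
      = ∑ i, (if i ∈ T then |v i| else 0) := by
        apply Finset.sum_congr rfl
        intro i _
        simp only [restr]
        split <;> simp
    _ = ∑ i ∈ T, |v i| := by rw [Finset.sum_ite_mem, Finset.univ_inter]

lemma l1_le_of_bound {d : ℕ} (v w : Fin d → ℝ) (h : ∀ i, |v i| ≤ |w i|) : l1 v ≤ l1 w :=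
  Finset.sum_le_sum fun i _ => h i

/-- Key induction: if all entries of `h` are bounded by `t`, then
`‖Φh‖ ≤ √1.1 (√s t + ‖h‖₁/√s)`. -/
lemma key_lemma {m d s : ℕ} (hs : 0 < s) {Φ : Matrix (Fin m) (Fin d) ℝ}
    (hΦ : RICq Φ s (1 / 10)) :
    ∀ n (h : Fin d → ℝ) (t : ℝ), 0 ≤ t → (fsupp h).card ≤ n → (∀ i, |h i| ≤ t) →
      l2 (Φ.mulVec h) ≤ Real.sqrt 1.1 * (Real.sqrt s * t + l1 h / Real.sqrt s) := by
  have hsr : (0:ℝ) < Real.sqrt s := Real.sqrt_pos.mpr (by exact_mod_cast hs)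
  intro n
  induction n using Nat.strong_induction_on with
  | _ n ih =>
    intro h t ht hcard hbound
    by_cases hle : (fsupp h).card ≤ s
    · -- sparse case
      have h1 : l2 (Φ.mulVec h) ≤ Real.sqrt 1.1 * l2 h := ric_l2 hΦ hle
      have h2 : l2 h ≤ Real.sqrt s * t + l1 h / Real.sqrt s := by
        have hsq : (l2 h) ^ 2 ≤ t * l1 h := by
          rw [l2_sq]
          calc ∑ i, (h i) ^ 2 ≤ ∑ i, t * |h i| := by
                apply Finset.sum_le_sum
                intro i _
                nlinarith [hbound i, abs_nonneg (h i), sq_abs (h i)]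
            _ = t * l1 h := by rw [l1, Finset.mul_sum]
        have h3 : t * l1 h = (Real.sqrt s * t) * (l1 h / Real.sqrt s) := by
          rw [div_eq_mul_inv]
          have : Real.sqrt s * Real.sqrt ↑s = (s:ℝ) := Real.mul_self_sqrt (Nat.cast_nonneg s)
          field_simp
        have ha : 0 ≤ Real.sqrt s * t := mul_nonneg hsr.le ht
        have hb : 0 ≤ l1 h / Real.sqrt s := div_nonneg (l1_nonneg h) hsr.le
        apply sqrt_mono_of_sq (l2_nonneg h) (by linarith)
        nlinarith [mul_nonneg ha hb, sq_nonneg (Real.sqrt s * t), sq_nonneg (l1 h / Real.sqrt s)]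
      calc l2 (Φ.mulVec h) ≤ Real.sqrt 1.1 * l2 h := h1
        _ ≤ Real.sqrt 1.1 * (Real.sqrt s * t + l1 h / Real.sqrt s) := by
          apply mul_le_mul_of_nonneg_left h2 (Real.sqrt_nonneg _)
    · -- inductive case
      push_neg at hle
      obtain ⟨T, hTsub, hTcard, hTtop⟩ := exists_top (fun i => |h i|) s (fsupp h) hle.le
      have hTne : T.Nonempty := Finset.card_pos.mp (hTcard ▸ hs)
      set t' : ℝ := T.inf' hTne (fun i => |h i|) with ht'def
      have ht'0 : 0 ≤ t' := by
        obtain ⟨i, hi, hie⟩ := Finset.exists_mem_eq_inf' hTne (fun i => |h i|)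
        rw [ht'def, hie]
        exact abs_nonneg _
      set h' : Fin d → ℝ := h - restr T h with hh'def
      have hsplit : h = restr T h + h' := by ext i; simp [hh'def]
      have hh'eq : ∀ i, h' i = if i ∈ T then 0 else h i := by
        intro i
        simp only [hh'def, restr, Pi.sub_apply]
        split <;> ring
      -- entries of h' bounded by t'
      have hb' : ∀ i, |h' i| ≤ t' := by
        intro i
        rw [hh'eq]
        by_cases hiT : i ∈ T
        · simp [hiT, ht'0]
        · rw [if_neg hiT]
          by_cases hz : h i = 0
          · simp [hz, ht'0]
          · apply Finset.le_inf'
            intro j hj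
            exact hTtop j hj i (Finset.mem_sdiff.mpr ⟨mem_fsupp.mpr hz, hiT⟩)
      -- support of h' small
      have hsupp' : fsupp h' ⊆ fsupp h \ T := by
        intro i hi
        rw [mem_fsupp, hh'eq] at hi
        by_cases hiT : i ∈ T
        · simp [hiT] at hi
        · rw [if_neg hiT] at hi
          exact Finset.mem_sdiff.mpr ⟨mem_fsupp.mpr hi, hiT⟩
      have hcard' : (fsupp h').card ≤ n - s := by
        calc (fsupp h').card ≤ (fsupp h \ T).card := Finset.card_le_card hsupp'
          _ = (fsupp h).card - s := by rw [Finset.card_sdiff_of_subset hTsub, hTcard]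
          _ ≤ n - s := Nat.sub_le_sub_right hcard s
      have hlt : n - s < n := by omega
      have IH := ih (n - s) hlt h' t' ht'0 hcard' hb'
      -- the sparse block
      have hTblock : l2 (Φ.mulVec (restr T h)) ≤ Real.sqrt 1.1 * l2 (restr T h) := by
        apply ric_l2 hΦ
        calc (fsupp (restr T h)).card ≤ T.card := Finset.card_le_card (fsupp_restr_subset T h)
          _ = s := hTcard
      have hTl2 : l2 (restr T h) ≤ Real.sqrt s * t := by
        have := l2_restr_le_sqrt_card_mul T h t ht (fun i _ => hbound i)
        rwa [hTcard] at this
      -- √s t' ≤ l1 (restr T h) / √s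
      have hst' : Real.sqrt s * t' ≤ l1 (restr T h) / Real.sqrt s := by
        have h1 : (s : ℝ) * t' ≤ l1 (restr T h) := by
          rw [l1_restr]
          calc (s : ℝ) * t' = ∑ _i ∈ T, t' := by rw [Finset.sum_const, hTcard]; ring
            _ ≤ ∑ i ∈ T, |h i| := Finset.sum_le_sum fun i hi => Finset.inf'_le _ hi
        rw [le_div_iff₀ hsr]
        calc Real.sqrt s * t' * Real.sqrt s = (Real.sqrt s * Real.sqrt s) * t' := by ring
          _ = (s : ℝ) * t' := by rw [Real.mul_self_sqrt (Nat.cast_nonneg s)]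
          _ ≤ _ := h1
      -- l1 splits
      have hl1 : l1 (restr T h) + l1 h' = l1 h := by
        unfold l1
        rw [← Finset.sum_add_distrib]
        apply Finset.sum_congr rfl
        intro i _
        rw [hh'eq]
        simp only [restr]
        by_cases hiT : i ∈ T <;> simp [hiT]
      -- combine
      have tri : l2 (Φ.mulVec h) ≤ l2 (Φ.mulVec (restr T h)) + l2 (Φ.mulVec h') := by
        conv_lhs => rw [hsplit]
        rw [Matrix.mulVec_add]
        exact l2_add_le _ _
      have hsq11 : (0:ℝ) ≤ Real.sqrt 1.1 := Real.sqrt_nonneg _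
      calc l2 (Φ.mulVec h) ≤ l2 (Φ.mulVec (restr T h)) + l2 (Φ.mulVec h') := tri
        _ ≤ Real.sqrt 1.1 * l2 (restr T h)
            + Real.sqrt 1.1 * (Real.sqrt s * t' + l1 h' / Real.sqrt s) :=
          add_le_add hTblock IH
        _ ≤ Real.sqrt 1.1 * (Real.sqrt s * t)
            + Real.sqrt 1.1 * (l1 (restr T h) / Real.sqrt s + l1 h' / Real.sqrt s) := by
          apply add_le_add
          · exact mul_le_mul_of_nonneg_left hTl2 hsq11
          · apply mul_le_mul_of_nonneg_left _ hsq11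
            exact add_le_add_left hst' _
        _ = Real.sqrt 1.1 * (Real.sqrt s * t + l1 h / Real.sqrt s) := by
          rw [← hl1]
          field_simp

/-- Top-level bound: `‖Φh‖ ≤ √1.1 (‖h‖₂ + ‖h‖₁/√s)` for arbitrary `h`. -/
lemma top_bound {m d s : ℕ} (hs : 0 < s) {Φ : Matrix (Fin m) (Fin d) ℝ}
    (hΦ : RICq Φ s (1 / 10)) (h : Fin d → ℝ) :
    l2 (Φ.mulVec h) ≤ Real.sqrt 1.1 * (l2 h + l1 h / Real.sqrt s) := by
  have hsr : (0:ℝ) < Real.sqrt s := Real.sqrt_pos.mpr (by exact_mod_cast hs)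
  have hsq11 : (0:ℝ) ≤ Real.sqrt 1.1 := Real.sqrt_nonneg _
  by_cases hle : (fsupp h).card ≤ s
  · calc l2 (Φ.mulVec h) ≤ Real.sqrt 1.1 * l2 h := ric_l2 hΦ hle
      _ ≤ Real.sqrt 1.1 * (l2 h + l1 h / Real.sqrt s) := by
        apply mul_le_mul_of_nonneg_left _ hsq11
        have := div_nonneg (l1_nonneg h) hsr.le
        linarith
  · push_neg at hle
    obtain ⟨T, hTsub, hTcard, hTtop⟩ := exists_top (fun i => |h i|) s (fsupp h) hle.le
    have hTne : T.Nonempty := Finset.card_pos.mp (hTcard ▸ hs)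
    set t' : ℝ := T.inf' hTne (fun i => |h i|) with ht'def
    have ht'0 : 0 ≤ t' := by
      obtain ⟨i, hi, hie⟩ := Finset.exists_mem_eq_inf' hTne (fun i => |h i|)
      rw [ht'def, hie]; exact abs_nonneg _
    set h' : Fin d → ℝ := h - restr T h with hh'def
    have hsplit : h = restr T h + h' := by ext i; simp [hh'def]
    have hh'eq : ∀ i, h' i = if i ∈ T then 0 else h i := by
      intro i
      simp only [hh'def, restr, Pi.sub_apply]
      split <;> ring
    have hb' : ∀ i, |h' i| ≤ t' := by
      intro i
      rw [hh'eq]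
      by_cases hiT : i ∈ T
      · simp [hiT, ht'0]
      · rw [if_neg hiT]
        by_cases hz : h i = 0
        · simp [hz, ht'0]
        · apply Finset.le_inf'
          intro j hj
          exact hTtop j hj i (Finset.mem_sdiff.mpr ⟨mem_fsupp.mpr hz, hiT⟩)
    have IH := key_lemma hs hΦ (fsupp h').card h' t' ht'0 le_rfl hb'
    have hTblock : l2 (Φ.mulVec (restr T h)) ≤ Real.sqrt 1.1 * l2 (restr T h) := by
      apply ric_l2 hΦ
      calc (fsupp (restr T h)).card ≤ T.card := Finset.card_le_card (fsupp_restr_subset T h)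
        _ = s := hTcard
    have hTl2 : l2 (restr T h) ≤ l2 h := by
      apply sqrt_mono_of_sq (l2_nonneg _) (l2_nonneg _)
      rw [l2_sq, l2_sq]
      apply Finset.sum_le_sum
      intro i _
      simp only [restr]
      split
      · exact le_refl _
      · simpa using sq_nonneg (h i)
    have hst' : Real.sqrt s * t' ≤ l1 (restr T h) / Real.sqrt s := by
      have h1 : (s : ℝ) * t' ≤ l1 (restr T h) := by
        rw [l1_restr]
        calc (s : ℝ) * t' = ∑ _i ∈ T, t' := by rw [Finset.sum_const, hTcard]; ring
          _ ≤ ∑ i ∈ T, |h i| := Finset.sum_le_sum fun i hi => Finset.inf'_le _ hi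
      rw [le_div_iff₀ hsr]
      calc Real.sqrt s * t' * Real.sqrt s = (Real.sqrt s * Real.sqrt s) * t' := by ring
        _ = (s : ℝ) * t' := by rw [Real.mul_self_sqrt (Nat.cast_nonneg s)]
        _ ≤ _ := h1
    have hl1 : l1 (restr T h) + l1 h' = l1 h := by
      unfold l1
      rw [← Finset.sum_add_distrib]
      apply Finset.sum_congr rfl
      intro i _
      rw [hh'eq]
      simp only [restr]
      by_cases hiT : i ∈ T <;> simp [hiT]
    have tri : l2 (Φ.mulVec h) ≤ l2 (Φ.mulVec (restr T h)) + l2 (Φ.mulVec h') := by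
      conv_lhs => rw [hsplit]
      rw [Matrix.mulVec_add]
      exact l2_add_le _ _
    calc l2 (Φ.mulVec h) ≤ l2 (Φ.mulVec (restr T h)) + l2 (Φ.mulVec h') := tri
      _ ≤ Real.sqrt 1.1 * l2 (restr T h)
          + Real.sqrt 1.1 * (Real.sqrt s * t' + l1 h' / Real.sqrt s) :=
        add_le_add hTblock IH
      _ ≤ Real.sqrt 1.1 * (l2 h)
          + Real.sqrt 1.1 * (l1 (restr T h) / Real.sqrt s + l1 h' / Real.sqrt s) := by
        apply add_le_add
        · exact mul_le_mul_of_nonneg_left hTl2 hsq11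
        · exact mul_le_mul_of_nonneg_left (add_le_add_left hst' _) hsq11
      _ = Real.sqrt 1.1 * (l2 h + l1 h / Real.sqrt s) := by
        rw [← hl1]
        field_simp

/-- **Reduction to Sparse Case.** Suppose `δ_s ≤ 0.1`. For arbitrary
`x ∈ ℝ^d` and `e ∈ ℝ^m`, with `x_s = restr S x` a best `s`-sparse approximation of `x`,
the samples `u = Φx + e` can be written `u = Φx_s + ẽ` with
`ẽ = Φ(x − x_s) + e` satisfying `‖ẽ‖₂ ≤ 1.05 (‖x − x_s‖₂ + ‖x − x_s‖₁/√s) + ‖e‖₂`. -/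
theorem stmt12 (m d s : ℕ) (hs : 0 < s)
    (Φ : Matrix (Fin m) (Fin d) ℝ) (hΦ : RICq Φ s (1 / 10))
    (x : Fin d → ℝ) (e : Fin m → ℝ)
    (S : Finset (Fin d)) (hcard : S.card = s)
    (hbig : ∀ i ∈ S, ∀ j ∉ S, |x j| ≤ |x i|) :
    Φ.mulVec x + e = Φ.mulVec (restr S x) + (Φ.mulVec (x - restr S x) + e) ∧
    l2 (Φ.mulVec (x - restr S x) + e) ≤
      1.05 * (l2 (x - restr S x) + l1 (x - restr S x) / Real.sqrt s) + l2 e := by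
  constructor
  · rw [Matrix.mulVec_sub]
    abel
  · set h := x - restr S x with hh
    have tri : l2 (Φ.mulVec h + e) ≤ l2 (Φ.mulVec h) + l2 e := l2_add_le _ _
    have hb := top_bound hs hΦ h
    have hsqrt : Real.sqrt 1.1 ≤ 1.05 := by
      rw [show (1.05:ℝ) = Real.sqrt (1.05 ^ 2) from (Real.sqrt_sq (by norm_num)).symm]
      apply Real.sqrt_le_sqrt
      norm_num
    have hpos : 0 ≤ l2 h + l1 h / Real.sqrt s := by
      have hsr : (0:ℝ) < Real.sqrt s := Real.sqrt_pos.mpr (by exact_mod_cast hs)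
      have := div_nonneg (l1_nonneg h) hsr.le
      have := l2_nonneg h
      linarith
    have : Real.sqrt 1.1 * (l2 h + l1 h / Real.sqrt s)
        ≤ 1.05 * (l2 h + l1 h / Real.sqrt s) :=
      mul_le_mul_of_nonneg_right hsqrt hpos
    linarith
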